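/- Let M, N ∈ ℝⁿˣⁿ be fixed matrices and δ > 0. If X ∈ Sⁿ (symmetric) satisfies X ⪰ δ(-K₁ₗM - K₂ₗN) and X ⪰ δ(K₁ₗM - K₂ₗN) interpreted as X ⪰ Sym of those matrices, for all l ∈ {1,...,4} (with K as defined), then for every (a, b) ∈ ℝ² with a² + b² ≤ δ², the symmetric matrix Sym(aM + bN) ⪰ -X, where Sym(A) = (A + Aᵀ)/2. -/

import Mathlib

open Matrix

/-- The fixed 2×4 matrix `K` from the paper. -/
noncomputable def Kmat : Matrix (Fin 2) (Fin 4) ℝ :=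
  !![1 - Real.sqrt 2, -1, -1, 1 - Real.sqrt 2;
     1, Real.sqrt 2 - 1, 1 - Real.sqrt 2, -1]

/-- Symmetrization of a square matrix: `Sym(A) = (A + Aᵀ)/2`. -/
noncomputable def symPart {n : ℕ} (A : Matrix (Fin n) (Fin n) ℝ) : Matrix (Fin n) (Fin n) ℝ :=
  (1 / 2 : ℝ) • (A + Aᵀ)

lemma quad_transpose {n : ℕ} (A : Matrix (Fin n) (Fin n) ℝ) (v : Fin n → ℝ) :
    v ⬝ᵥ (Aᵀ *ᵥ v) = v ⬝ᵥ (A *ᵥ v) := by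
  rw [Matrix.dotProduct_mulVec, Matrix.vecMul_transpose, dotProduct_comm,
    Matrix.dotProduct_mulVec]

lemma quad_symPart {n : ℕ} (A : Matrix (Fin n) (Fin n) ℝ) (v : Fin n → ℝ) :
    v ⬝ᵥ (symPart A *ᵥ v) = v ⬝ᵥ (A *ᵥ v) := by
  simp only [symPart, Matrix.smul_mulVec, Matrix.add_mulVec, dotProduct_smul,
    dotProduct_add, quad_transpose, smul_eq_mul]
  ring

lemma symPart_isHermitian {n : ℕ} (A : Matrix (Fin n) (Fin n) ℝ) :
    (symPart A).IsHermitian := by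
  ext i j
  simp [symPart, Matrix.conjTranspose_apply, Matrix.transpose_apply]
  ring

lemma key_scalar (r δ x m n a b : ℝ) (hr : r = Real.sqrt 2 - 1)
    (hpp : δ*(m + r*n) ≤ x) (hpm : δ*(m - r*n) ≤ x)
    (hmp : δ*(-m + r*n) ≤ x) (hmm : δ*(-m - r*n) ≤ x)
    (hPP : δ*(r*m + n) ≤ x) (hPM : δ*(r*m - n) ≤ x)
    (hMP : δ*(-(r*m) + n) ≤ x) (hMM : δ*(-(r*m) - n) ≤ x)
    (hδ : 0 < δ) (hab : a^2 + b^2 ≤ δ^2) : 0 ≤ a*m + b*n + x := by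
  have h2 : Real.sqrt 2 ^ 2 = 2 := Real.sq_sqrt (by norm_num)
  have hr1 : 0 < r := by
    have : (1:ℝ) < Real.sqrt 2 := by nlinarith [Real.sqrt_nonneg 2]
    rw [hr]; linarith
  have hz : r^2 + 2*r - 1 = 0 := by rw [hr]; nlinarith
  have hA : δ*(|m| + r*|n|) ≤ x := by
    rcases abs_cases m with ⟨hm, _⟩|⟨hm, _⟩ <;> rcases abs_cases n with ⟨hn,_⟩|⟨hn,_⟩ <;>
      rw [hm, hn] <;> linarith
  have hB : δ*(r*|m| + |n|) ≤ x := by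
    rcases abs_cases m with ⟨hm, _⟩|⟨hm, _⟩ <;> rcases abs_cases n with ⟨hn,_⟩|⟨hn,_⟩ <;>
      rw [hm, hn] <;> linarith
  have hx0 : 0 ≤ x := by nlinarith [abs_nonneg m, abs_nonneg n]
  have hx2 : δ^2*(m^2+n^2) ≤ x^2 := by
    rcases le_total (|n|) (|m|) with hc | hc
    · have t : 0 ≤ δ^2 * (2*r*|n| * (|m| - |n|)) :=
        mul_nonneg (sq_nonneg δ)
          (mul_nonneg (by positivity) (sub_nonneg.2 hc))
      have h0 : 0 ≤ δ*(|m| + r*|n|) := by positivity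
      have hsq : (δ*(|m| + r*|n|))^2 ≤ x^2 := by
        rw [sq, sq]; exact mul_self_le_mul_self h0 hA
      have expand : (δ*(|m| + r*|n|))^2
          = δ^2*(|m|^2+|n|^2) + δ^2*(2*r*|n| * (|m| - |n|)) + (r^2+2*r-1)*(δ^2*|n|^2) := by
        ring
      rw [hz, sq_abs, sq_abs] at expand
      linarith [expand, t, hsq]
    · have t : 0 ≤ δ^2 * (2*r*|m| * (|n| - |m|)) :=
        mul_nonneg (sq_nonneg δ)
          (mul_nonneg (by positivity) (sub_nonneg.2 hc))
      have h0 : 0 ≤ δ*(r*|m| + |n|) := by positivity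
      have hsq : (δ*(r*|m| + |n|))^2 ≤ x^2 := by
        rw [sq, sq]; exact mul_self_le_mul_self h0 hB
      have expand : (δ*(r*|m| + |n|))^2
          = δ^2*(|m|^2+|n|^2) + δ^2*(2*r*|m| * (|n| - |m|)) + (r^2+2*r-1)*(δ^2*|m|^2) := by
        ring
      rw [hz, sq_abs, sq_abs] at expand
      linarith [expand, t, hsq]
  have hy2 : (a*m + b*n)^2 ≤ x^2 := by
    have c : (a*m+b*n)^2 + (a*n-b*m)^2 = (a^2+b^2)*(m^2+n^2) := by ring
    have c2 : (a^2+b^2)*(m^2+n^2) ≤ δ^2*(m^2+n^2) :=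
      mul_le_mul_of_nonneg_right hab (by positivity)
    linarith [sq_nonneg (a*n-b*m)]
  rcases le_total 0 (a*m + b*n) with hy | hy
  · linarith
  · nlinarith [hy2, hx0]

/-- If a symmetric matrix `X` dominates `Sym(δ(±K₁ₗ M - K₂ₗ N))` for `l = 1,…,4`,
then for every `(a, b)` with `a² + b² ≤ δ²` we have `Sym(aM + bN) ⪰ -X`. -/
theorem symPart_lower_bound_from_K_constraints {n : ℕ}
    (M N X : Matrix (Fin n) (Fin n) ℝ) (δ : ℝ) (hδ : 0 < δ)
    (hX : X.IsSymm)
    (h1 : ∀ l : Fin 4,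
      (X - symPart (δ • ((-Kmat 0 l) • M - Kmat 1 l • N))).PosSemidef)
    (h2 : ∀ l : Fin 4,
      (X - symPart (δ • (Kmat 0 l • M - Kmat 1 l • N))).PosSemidef) :
    ∀ a b : ℝ, a ^ 2 + b ^ 2 ≤ δ ^ 2 →
      (symPart (a • M + b • N) + X).PosSemidef := by
  intro a b hab
  have hXH : X.IsHermitian := by
    ext i j
    simp [Matrix.conjTranspose_apply, hX.apply]
  refine Matrix.posSemidef_iff_dotProduct_mulVec.mpr ⟨(symPart_isHermitian _).add hXH, fun v => ?_⟩
  rw [show star v = v from by simp]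
  have hcon : ∀ (c d : ℝ), (X - symPart (δ • (c • M - d • N))).PosSemidef →
      δ*(c*(v ⬝ᵥ (M *ᵥ v)) - d*(v ⬝ᵥ (N *ᵥ v))) ≤ v ⬝ᵥ (X *ᵥ v) := by
    intro c d h
    have h2 := h.dotProduct_mulVec_nonneg v
    rw [show star v = v from by simp] at h2
    have hq : v ⬝ᵥ ((X - symPart (δ • (c • M - d • N))) *ᵥ v)
        = v ⬝ᵥ (X *ᵥ v) - δ*(c*(v ⬝ᵥ (M *ᵥ v)) - d*(v ⬝ᵥ (N *ᵥ v))) := by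
      rw [Matrix.sub_mulVec, dotProduct_sub, quad_symPart]
      simp only [Matrix.smul_mulVec, Matrix.sub_mulVec, dotProduct_smul,
        dotProduct_sub, smul_eq_mul]
    rw [hq] at h2
    linarith
  have K00 : Kmat 0 0 = 1 - Real.sqrt 2 := by simp [Kmat]
  have K01 : Kmat 0 1 = -1 := by simp [Kmat]
  have K02 : Kmat 0 2 = -1 := by simp [Kmat]
  have K03 : Kmat 0 3 = 1 - Real.sqrt 2 := by simp [Kmat]
  have K10 : Kmat 1 0 = 1 := by simp [Kmat]
  have K11 : Kmat 1 1 = Real.sqrt 2 - 1 := by simp [Kmat]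
  have K12 : Kmat 1 2 = 1 - Real.sqrt 2 := by simp [Kmat]
  have K13 : Kmat 1 3 = -1 := by simp [Kmat]
  set m := v ⬝ᵥ (M *ᵥ v) with hm
  set nn := v ⬝ᵥ (N *ᵥ v) with hnn
  set x := v ⬝ᵥ (X *ᵥ v) with hx
  have e10 := hcon _ _ (h1 0); have e11 := hcon _ _ (h1 1)
  have e12 := hcon _ _ (h1 2); have e13 := hcon _ _ (h1 3)
  have e20 := hcon _ _ (h2 0); have e21 := hcon _ _ (h2 1)
  have e22 := hcon _ _ (h2 2); have e23 := hcon _ _ (h2 3)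
  rw [K00, K10] at e10 e20
  rw [K01, K11] at e11 e21
  rw [K02, K12] at e12 e22
  rw [K03, K13] at e13 e23
  have goalq : v ⬝ᵥ ((symPart (a • M + b • N) + X) *ᵥ v) = a*m + b*nn + x := by
    rw [Matrix.add_mulVec, dotProduct_add, quad_symPart]
    simp only [Matrix.add_mulVec, Matrix.smul_mulVec, dotProduct_add,
      dotProduct_smul, smul_eq_mul, ← hm, ← hnn, ← hx]
  rw [goalq]
  have cpp : δ*(m + (Real.sqrt 2 - 1)*nn) ≤ x := by linarith [e12]
  have cpm : δ*(m - (Real.sqrt 2 - 1)*nn) ≤ x := by linarith [e11]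
  have cmp : δ*(-m + (Real.sqrt 2 - 1)*nn) ≤ x := by linarith [e22]
  have cmm : δ*(-m - (Real.sqrt 2 - 1)*nn) ≤ x := by linarith [e21]
  have cPP : δ*((Real.sqrt 2 - 1)*m + nn) ≤ x := by linarith [e13]
  have cPM : δ*((Real.sqrt 2 - 1)*m - nn) ≤ x := by linarith [e10]
  have cMP : δ*(-((Real.sqrt 2 - 1)*m) + nn) ≤ x := by linarith [e23]
  have cMM : δ*(-((Real.sqrt 2 - 1)*m) - nn) ≤ x := by linarith [e20]
  exact key_scalar (Real.sqrt 2 - 1) δ x m nn a b rfl cpp cpm cmp cmm cPP cPM cMP cMM hδ hab
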